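/- Let C > 0, z ∈ (0,1), q ∈ [0,1), and 0 < δ₁ < C·z·(1−q). Set s = 1−z+zq, a₀ = C, b₀ = (1−q)(1−z)(C−δ₁)/s, and d₀ = (C−δ₁)/s. Then d₀ > a₀, and for every ε with 0 < ε < δ₁(1−z)s/((1−q)C − δ₁), one has (d₀−a₀)/(d₀−a₀+b₀) < z − ε. -/

import Mathlib

/-- Base step of the induction in the proof of Lemma 2: for the reward function equal
to `C` at minimum hop count and `C−δ₁` at larger hop counts, `d₀ > a₀` and the
fixed-point quantity `(d₀−a₀)/(d₀−a₀+b₀)` is strictly below `z − ε`. -/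
theorem base_step_induction (C z q δ₁ s a₀ b₀ d₀ : ℝ)
    (hC : 0 < C) (hz0 : 0 < z) (hz1 : z < 1) (hq0 : 0 ≤ q) (hq1 : q < 1)
    (hδ0 : 0 < δ₁) (hδ : δ₁ < C * z * (1 - q))
    (hs : s = 1 - z + z * q)
    (ha : a₀ = C)
    (hb : b₀ = (1 - q) * (1 - z) * (C - δ₁) / s)
    (hd : d₀ = (C - δ₁) / s) :
    a₀ < d₀ ∧ ∀ ε : ℝ, 0 < ε → ε < δ₁ * (1 - z) * s / ((1 - q) * C - δ₁) →
      (d₀ - a₀) / (d₀ - a₀ + b₀) < z - ε := by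
  subst hb hd hs
  rw [ha]
  have hs0 : (0:ℝ) < 1 - z + z * q := by nlinarith
  have hN : (0:ℝ) < C * z * (1 - q) - δ₁ := by linarith
  have hda : C * z * (1 - q) - δ₁ = (C - δ₁) / (1 - z + z * q) * (1 - z + z * q)
      - C * (1 - z + z * q) := by
    field_simp
    ring
  have hdiff : (C - δ₁) / (1 - z + z * q) - C
      = (C * z * (1 - q) - δ₁) / (1 - z + z * q) := by
    field_simp
    ring
  have hD : (0:ℝ) < (1 - q) * C - δ₁ := by nlinarith
  constructor
  · have := div_pos hN hs0
    linarith [hdiff ▸ this]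
  · intro ε hε0 hε
    have hεD : ε * ((1 - q) * C - δ₁) < δ₁ * (1 - z) * (1 - z + z * q) := by
      exact (lt_div_iff₀ hD).mp hε
    have hM : (0:ℝ) < (C - δ₁) / (1 - z + z * q) - C
        + (1 - q) * (1 - z) * (C - δ₁) / (1 - z + z * q) := by
      rw [hdiff]
      have hb0 : (0:ℝ) < (1 - q) * (1 - z) * (C - δ₁) / (1 - z + z * q) := by
        apply div_pos _ hs0
        have hCd : (0:ℝ) < C - δ₁ := by nlinarith
        exact mul_pos (mul_pos (by linarith) (by linarith)) hCd
      have := div_pos hN hs0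
      linarith
    rw [div_lt_iff₀ hM, hdiff, ← add_div, ← mul_div_assoc,
      div_lt_div_iff₀ hs0 hs0]
    have h1 : 0 ≤ ε * (δ₁ * (1 - q) * (1 - z)) :=
      mul_nonneg hε0.le (mul_nonneg (mul_nonneg hδ0.le (by linarith)) (by linarith))
    have key : (C * z * (1 - q) - δ₁)
        < (z - ε) * ((C * z * (1 - q) - δ₁) + (1 - q) * (1 - z) * (C - δ₁)) := by
      nlinarith [hεD, h1]
    nlinarith [mul_lt_mul_of_pos_right key hs0]
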